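/- Let R > 0, let ψ₂ : ℝ → ℝ be K-Lipschitz with support contained in [−R, R], let 0 < α < 1 and C ≥ 0, and let W be a measurable function on (ℝ \ {0}) × ℝ with |W(a, b)| ≤ C·|a|^{α + 1/2} for all a with 0 < |a| ≤ 1 and all b ∈ ℝ. Define the small-scale part f_S(x) = ∫_{0 < |a| ≤ 1} ∫_ℝ a^{−2}·W(a, b)·|a|^{−1/2}·ψ₂((x − b)/a) db da. Then there exists a constant C″ ≥ 0 such that |f_S(x + δ) − f_S(x)| ≤ C″·|δ|^α for every x ∈ ℝ and every δ with 0 < |δ| ≤ 1. -/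

import Mathlib

open MeasureTheory Real Set

lemma aux_ii_pos (r : ℝ) (u v : ℝ) (hu : 0 < u) (huv : u ≤ v) :
    IntervalIntegrable (fun a => |a| ^ r) volume u v := by
  have h := intervalIntegral.intervalIntegrable_rpow (μ := volume) (a := u) (b := v) (r := r)
    (Or.inr (by rw [uIcc_of_le huv]; rintro ⟨h0, -⟩; exact absurd h0 (not_le.2 hu)))
  refine h.congr ?_
  intro a ha
  rw [uIoc_of_le huv] at ha
  beta_reduce
  rw [abs_of_pos (lt_trans hu ha.1)]

lemma aux_ii_zero (r : ℝ) (hr : -1 < r) (w : ℝ) (hw : 0 ≤ w) :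
    IntervalIntegrable (fun a => |a| ^ r) volume 0 w := by
  have h := intervalIntegral.intervalIntegrable_rpow' (a := 0) (b := w) hr
  refine h.congr ?_
  intro a ha
  rw [uIoc_of_le hw] at ha
  beta_reduce
  rw [abs_of_pos ha.1]

lemma aux_even_neg (r : ℝ) (u v : ℝ) (h : IntervalIntegrable (fun a => |a| ^ r) volume u v) :
    IntervalIntegrable (fun a => |a| ^ r) volume (-v) (-u) := by
  have := (IntervalIntegrable.iff_comp_neg (by simp)).mp h.symm
  simpa using this

lemma aux_int_compneg (r u v : ℝ) :
    ∫ a in (-v)..(-u), |a| ^ r = ∫ a in u..v, |a| ^ r := by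
  rw [← intervalIntegral.integral_comp_neg (fun a => |a| ^ r)]
  simp

lemma aux_int_zero_w (r : ℝ) (hr : -1 < r) (w : ℝ) (hw : 0 ≤ w) :
    ∫ a in (0:ℝ)..w, |a| ^ r = w ^ (r + 1) / (r + 1) := by
  rw [intervalIntegral.integral_congr (g := fun a => a ^ r) ?_, integral_rpow (Or.inl hr)]
  · rw [zero_rpow (by linarith)]; ring
  · intro a ha
    rw [uIcc_of_le hw] at ha
    simp [abs_of_nonneg ha.1]

/-- Integral of `|a|^r` over a symmetric interval, `-1 < r`. -/
lemma aux_sym (r : ℝ) (hr : -1 < r) (d : ℝ) (hd : 0 ≤ d) :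
    IntegrableOn (fun a => |a| ^ r) (Ioc (-d) d) volume ∧
    ∫ a in Ioc (-d) d, |a| ^ r = 2 * (d ^ (r + 1) / (r + 1)) := by
  have h1 : IntervalIntegrable (fun a => |a| ^ r) volume 0 d := aux_ii_zero r hr d hd
  have h2 : IntervalIntegrable (fun a => |a| ^ r) volume (-d) 0 := by
    simpa using aux_even_neg r 0 d h1
  have hii : IntervalIntegrable (fun a => |a| ^ r) volume (-d) d := h2.trans h1
  constructor
  · exact (intervalIntegrable_iff_integrableOn_Ioc_of_le (by linarith)).mp hii
  · rw [← intervalIntegral.integral_of_le (by linarith : -d ≤ d),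
      ← intervalIntegral.integral_add_adjacent_intervals h2 h1]
    have : ∫ a in (-d)..(0:ℝ), |a| ^ r = ∫ a in (0:ℝ)..d, |a| ^ r := by
      simpa using aux_int_compneg r 0 d
    rw [this, aux_int_zero_w r hr d hd]; ring

/-- Integral of `|a|^r` over `{d ≤ |a| ≤ 1}`, `r < -1`. -/
lemma aux_tail (r : ℝ) (hr : r < -1) (d : ℝ) (hd : 0 < d) (hd1 : d ≤ 1) :
    IntegrableOn (fun a => |a| ^ r) (Icc (-1) (-d) ∪ Ioc d 1) volume ∧
    ∫ a in Icc (-1) (-d) ∪ Ioc d 1, |a| ^ r ≤ 2 * (d ^ (r + 1) / (-(r + 1))) := by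
  have h1 : IntervalIntegrable (fun a => |a| ^ r) volume d 1 := aux_ii_pos r d 1 hd hd1
  have h2 : IntervalIntegrable (fun a => |a| ^ r) volume (-1) (-d) := aux_even_neg r d 1 h1
  have hI1 : IntegrableOn (fun a => |a| ^ r) (Ioc d 1) volume :=
    (intervalIntegrable_iff_integrableOn_Ioc_of_le hd1).mp h1
  have hI2 : IntegrableOn (fun a => |a| ^ r) (Icc (-1) (-d)) volume := by
    rw [integrableOn_Icc_iff_integrableOn_Ioc]
    exact (intervalIntegrable_iff_integrableOn_Ioc_of_le (by linarith)).mp h2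
  have hdisj : Disjoint (Icc (-1:ℝ) (-d)) (Ioc d 1) := by
    rw [Set.disjoint_left]; rintro a ⟨-, ha2⟩ ⟨hb1, -⟩; linarith
  have hval : ∫ a in (d)..(1:ℝ), |a| ^ r = (1 - d ^ (r+1)) / (r + 1) := by
    rw [intervalIntegral.integral_congr (g := fun a => a ^ r) ?_,
      integral_rpow (Or.inr ⟨by linarith, by rw [uIcc_of_le hd1]; rintro ⟨h0, -⟩; linarith⟩)]
    · rw [one_rpow]
    · intro a ha
      rw [uIcc_of_le hd1] at ha
      simp [abs_of_pos (lt_of_lt_of_le hd ha.1)]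
  have hbound : (1 - d ^ (r+1)) / (r + 1) ≤ d ^ (r + 1) / (-(r + 1)) := by
    have h01 : (0:ℝ) < d ^ (r+1) := rpow_pos_of_pos hd _
    have hneg : (0:ℝ) < -(r+1) := by linarith
    have e : (1 - d ^ (r+1)) / (r + 1) = (d ^ (r+1) - 1) / (-(r+1)) := by
      rw [div_eq_div_iff (by linarith) (by linarith)]; ring
    rw [e]
    gcongr
    linarith
  constructor
  · exact hI2.union hI1
  · rw [setIntegral_union hdisj measurableSet_Ioc hI2 hI1]
    have e2 : ∫ a in Icc (-1:ℝ) (-d), |a| ^ r = ∫ a in (d)..(1:ℝ), |a| ^ r := by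
      rw [setIntegral_congr_set (Ioc_ae_eq_Icc).symm,
        ← intervalIntegral.integral_of_le (by linarith : (-1:ℝ) ≤ -d)]
      exact aux_int_compneg r d 1
    have e1 : ∫ a in Ioc d 1, |a| ^ r = ∫ a in (d)..(1:ℝ), |a| ^ r :=
      (intervalIntegral.integral_of_le hd1).symm
    rw [e1, e2, hval]
    linarith [hbound]

set_option maxHeartbeats 2000000

lemma aux_mul_le (p q w z P Q : ℝ) (hp : 0 ≤ p) (hq : 0 ≤ q)
    (hw : |w| ≤ P) (hz : |z| ≤ Q) :
    p * |w| * (q * |z|) ≤ p * P * (q * Q) := by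
  have h1 : p * |w| ≤ p * P := mul_le_mul_of_nonneg_left hw hp
  have h2 : q * |z| ≤ q * Q := mul_le_mul_of_nonneg_left hz hq
  exact mul_le_mul h1 h2 (mul_nonneg hq (abs_nonneg z))
    (le_trans (mul_nonneg hp (abs_nonneg w)) h1)

/-- Eqs. (23)–(24) in the appendix proof of Theorem 3.2: the small-scale part `f_S` of the
wavelet reconstruction, built from coefficients `W` decaying like `C · |a|^(α + 1/2)` and a
compactly supported Lipschitz reconstruction wavelet `ψ₂`, is Hölder continuous with
exponent `α`. -/
theorem small_scale_part_holder
    (R K : ℝ) (hR : 0 < R)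
    (ψ₂ : ℝ → ℝ) (W : ℝ → ℝ → ℝ) (fS : ℝ → ℝ) (α C : ℝ)
    (hψ₂_lip : ∀ z t : ℝ, |ψ₂ (z + t) - ψ₂ z| ≤ K * |t|)
    (hψ₂_supp : Function.support ψ₂ ⊆ Set.Icc (-R) R)
    (hα_pos : 0 < α) (hα_lt : α < 1) (hC : 0 ≤ C)
    (hW_meas : Measurable (Function.uncurry W))
    (h_decay : ∀ a : ℝ, 0 < |a| → |a| ≤ 1 → ∀ b : ℝ, |W a b| ≤ C * |a| ^ (α + 1 / 2))
    (hfS : ∀ x : ℝ,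
      fS x = ∫ a in {a : ℝ | 0 < |a| ∧ |a| ≤ 1},
               ∫ b : ℝ, (a ^ 2)⁻¹ * W a b * (|a| ^ (-(1 : ℝ) / 2) * ψ₂ ((x - b) / a))) :
    ∃ C'' : ℝ, 0 ≤ C'' ∧ ∀ x δ : ℝ, 0 < |δ| → |δ| ≤ 1 →
      |fS (x + δ) - fS x| ≤ C'' * |δ| ^ α := by
  -- Basic facts about `K` and `ψ₂`.
  have hK : 0 ≤ K := by
    have h := hψ₂_lip 0 1
    have h0 : (0:ℝ) ≤ |ψ₂ (0 + 1) - ψ₂ 0| := abs_nonneg _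
    simpa using le_trans h0 h
  have hψ₂_cont : Continuous ψ₂ := by
    have : LipschitzWith (Real.toNNReal K) ψ₂ := by
      apply LipschitzWith.of_dist_le_mul
      intro z w
      have h := hψ₂_lip w (z - w)
      simp only [add_sub_cancel] at h
      rw [Real.dist_eq, Real.dist_eq, Real.coe_toNNReal K hK]
      calc |ψ₂ z - ψ₂ w| ≤ K * |z - w| := h
        _ = K * |z - w| := rfl
    exact this.continuous
  set M : ℝ := K * (2 * R + 1) with hM_def
  have hM : 0 ≤ M := mul_nonneg hK (by linarith)
  have hψ₂_bdd : ∀ z : ℝ, |ψ₂ z| ≤ M := by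
    intro z
    by_cases hz : ψ₂ z = 0
    · simp [hz, hM]
    · have hz' : z ∈ Set.Icc (-R) R := hψ₂_supp hz
      have hout : ψ₂ (z + (2 * R + 1)) = 0 := by
        by_contra h
        have hmem := hψ₂_supp h
        have : z + (2 * R + 1) ≤ R := hmem.2
        have : -R ≤ z := hz'.1
        linarith
      have h := hψ₂_lip z (2 * R + 1)
      rw [hout, zero_sub, abs_neg,
        abs_of_nonneg (by linarith : (0:ℝ) ≤ 2 * R + 1)] at h
      exact h
  set S : Set ℝ := {a : ℝ | 0 < |a| ∧ |a| ≤ 1} with hS_def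
  have hSm : MeasurableSet S := by
    have : S = (fun a : ℝ => |a|) ⁻¹' (Set.Ioc 0 1) := by ext a; simp [hS_def, Set.mem_Ioc]
    rw [this]
    exact (measurable_abs) measurableSet_Ioc
  set F : ℝ → ℝ → ℝ := fun x a =>
    ∫ b : ℝ, (a ^ 2)⁻¹ * W a b * (|a| ^ (-(1 : ℝ) / 2) * ψ₂ ((x - b) / a)) with hF_def
  -- measurability of inner integrands
  have hWa : ∀ a : ℝ, Measurable (W a) := by
    intro a
    exact hW_meas.comp (measurable_const.prodMk measurable_id)
  have hinner_meas : ∀ x a : ℝ,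
      Measurable (fun b => (a ^ 2)⁻¹ * W a b * (|a| ^ (-(1 : ℝ) / 2) * ψ₂ ((x - b) / a))) := by
    intro x a
    apply Measurable.mul
    · exact (measurable_const.mul (hWa a))
    · apply Measurable.mul measurable_const
      exact hψ₂_cont.measurable.comp ((measurable_const.sub measurable_id).div measurable_const)
  -- integrability of the inner integrand for `a ∈ S`
  have habs_pos : ∀ a : ℝ, a ∈ S → 0 < |a| := fun a ha => ha.1
  have hinner_int : ∀ x a : ℝ, a ∈ S →
      Integrable (fun b => (a ^ 2)⁻¹ * W a b * (|a| ^ (-(1 : ℝ) / 2) * ψ₂ ((x - b) / a)))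
        volume := by
    intro x a ha
    have hc : (0:ℝ) ≤ (a ^ 2)⁻¹ * (C * |a| ^ (α + 1 / 2)) * (|a| ^ (-(1 : ℝ) / 2) * M) := by
      positivity
    refine Integrable.mono'
      (g := (Set.Icc (x - R * |a|) (x + R * |a|)).indicator
        (fun _ => (a ^ 2)⁻¹ * (C * |a| ^ (α + 1 / 2)) * (|a| ^ (-(1 : ℝ) / 2) * M)))
      ?_ (hinner_meas x a).aestronglyMeasurable ?_
    · refine (integrableOn_const ?_).integrable_indicator measurableSet_Icc
      exact measure_Icc_lt_top.ne
    · refine Filter.Eventually.of_forall fun b => ?_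
      rw [Real.norm_eq_abs]
      by_cases hb : ψ₂ ((x - b) / a) = 0
      · simp only [hb, mul_zero]
        refine le_trans (le_of_eq ?_) (Set.indicator_nonneg (fun _ _ => hc) b)
        simp
      · have hbmem : b ∈ Set.Icc (x - R * |a|) (x + R * |a|) := by
          have h1 : (x - b) / a ∈ Set.Icc (-R) R := hψ₂_supp hb
          have h2 : |(x - b) / a| ≤ R := abs_le.2 ⟨h1.1, h1.2⟩
          rw [abs_div] at h2
          have h3 : |x - b| ≤ R * |a| :=
            (div_le_iff₀ (habs_pos a ha)).mp h2
          have h4 := abs_le.1 h3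
          constructor <;> [linarith [h4.2]; linarith [h4.1]]
        rw [Set.indicator_of_mem hbmem]
        rw [abs_mul, abs_mul, abs_mul]
        have e1 : |(a ^ 2)⁻¹| = (a ^ 2)⁻¹ := abs_of_nonneg (by positivity)
        have e2 : abs (|a| ^ (-(1 : ℝ) / 2)) = |a| ^ (-(1 : ℝ) / 2) := abs_of_nonneg (by positivity)
        rw [e1, e2]
        exact aux_mul_le _ _ _ _ _ _ (by positivity) (by positivity)
          (h_decay a ha.1 ha.2 b) (hψ₂_bdd _)
  -- algebraic identity for powers of |a|
  have hpow : ∀ a : ℝ, 0 < |a| → ∀ p q : ℝ, |a| ^ p * |a| ^ q = |a| ^ (p + q) :=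
    fun a ha p q => (rpow_add ha p q).symm
  have hsq : ∀ a : ℝ, 0 < |a| → (a ^ 2)⁻¹ = |a| ^ (-2 : ℝ) := by
    intro a ha
    rw [← sq_abs, ← rpow_two, ← rpow_neg (abs_nonneg a)]
  -- bound on |F x a|
  have hF_bound : ∀ x a : ℝ, a ∈ S → |F x a| ≤ 2 * C * M * R * |a| ^ (α - 1) := by
    intro x a ha
    have ha0 : 0 < |a| := habs_pos a ha
    have hind : ‖∫ b : ℝ, (a ^ 2)⁻¹ * W a b * (|a| ^ (-(1 : ℝ) / 2) * ψ₂ ((x - b) / a))‖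
        ≤ ∫ b : ℝ, (Set.Icc (x - R * |a|) (x + R * |a|)).indicator
          (fun _ => (a ^ 2)⁻¹ * (C * |a| ^ (α + 1 / 2)) * (|a| ^ (-(1 : ℝ) / 2) * M)) b := by
      refine norm_integral_le_of_norm_le ?_ ?_
      · refine (integrableOn_const ?_).integrable_indicator measurableSet_Icc
        exact measure_Icc_lt_top.ne
      · refine Filter.Eventually.of_forall fun b => ?_
        rw [Real.norm_eq_abs]
        by_cases hb : ψ₂ ((x - b) / a) = 0
        · simp only [hb, mul_zero]
          refine le_trans (le_of_eq ?_) (Set.indicator_nonneg (fun _ _ => by positivity) b)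
          simp
        · have hbmem : b ∈ Set.Icc (x - R * |a|) (x + R * |a|) := by
            have h1 : (x - b) / a ∈ Set.Icc (-R) R := hψ₂_supp hb
            have h2 : |(x - b) / a| ≤ R := abs_le.2 ⟨h1.1, h1.2⟩
            rw [abs_div] at h2
            have h3 : |x - b| ≤ R * |a| := (div_le_iff₀ ha0).mp h2
            have h4 := abs_le.1 h3
            constructor <;> [linarith [h4.2]; linarith [h4.1]]
          rw [Set.indicator_of_mem hbmem]
          rw [abs_mul, abs_mul, abs_mul]
          have e1 : |(a ^ 2)⁻¹| = (a ^ 2)⁻¹ := abs_of_nonneg (by positivity)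
          have e2 : abs (|a| ^ (-(1 : ℝ) / 2)) = |a| ^ (-(1 : ℝ) / 2) := abs_of_nonneg (by positivity)
          rw [e1, e2]
          exact aux_mul_le _ _ _ _ _ _ (by positivity) (by positivity)
            (h_decay a ha.1 ha.2 b) (hψ₂_bdd _)
    have hvol : ∫ b : ℝ, (Set.Icc (x - R * |a|) (x + R * |a|)).indicator
        (fun _ => (a ^ 2)⁻¹ * (C * |a| ^ (α + 1 / 2)) * (|a| ^ (-(1 : ℝ) / 2) * M)) b
        = ((a ^ 2)⁻¹ * (C * |a| ^ (α + 1 / 2)) * (|a| ^ (-(1 : ℝ) / 2) * M)) * (2 * R * |a|) := by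
      rw [integral_indicator_const _ measurableSet_Icc]
      rw [Real.volume_real_Icc]
      have : x + R * |a| - (x - R * |a|) = 2 * R * |a| := by ring
      rw [this, max_eq_left (by positivity)]
      simp [mul_comm]
    have halg : ((a ^ 2)⁻¹ * (C * |a| ^ (α + 1 / 2)) * (|a| ^ (-(1 : ℝ) / 2) * M)) * (2 * R * |a|)
        = 2 * C * M * R * |a| ^ (α - 1) := by
      rw [hsq a ha0]
      have e : |a| = |a| ^ (1 : ℝ) := (rpow_one _).symm
      calc |a| ^ (-2:ℝ) * (C * |a| ^ (α + 1 / 2)) * (|a| ^ (-(1 : ℝ) / 2) * M) * (2 * R * |a|)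
          = 2 * C * M * R *
            (|a| ^ (-2:ℝ) * |a| ^ (α + 1 / 2) * |a| ^ (-(1 : ℝ) / 2) * |a| ^ (1:ℝ)) := by
            rw [← e]; ring
        _ = 2 * C * M * R * |a| ^ (α - 1) := by
            rw [hpow a ha0, hpow a ha0, hpow a ha0,
              show (-2:ℝ) + (α + 1 / 2) + (-(1:ℝ) / 2) + 1 = α - 1 by ring]
    rw [Real.norm_eq_abs] at hind
    calc |F x a| ≤ _ := hind
      _ = 2 * C * M * R * |a| ^ (α - 1) := by rw [hvol, halg]
  -- bound on the difference |F (x+δ) a - F x a| for |δ| ≤ |a|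
  have hF_diff : ∀ x δ a : ℝ, a ∈ S → 0 < |δ| → |δ| ≤ |a| →
      |F (x + δ) a - F x a| ≤ 2 * C * K * (R + 1) * |δ| * |a| ^ (α - 2) := by
    intro x δ a ha hδ hδa
    have ha0 : 0 < |a| := habs_pos a ha
    have hsub : F (x + δ) a - F x a
        = ∫ b : ℝ, ((a ^ 2)⁻¹ * W a b * (|a| ^ (-(1 : ℝ) / 2) * ψ₂ ((x + δ - b) / a))
            - (a ^ 2)⁻¹ * W a b * (|a| ^ (-(1 : ℝ) / 2) * ψ₂ ((x - b) / a))) := by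
      rw [hF_def]
      exact (integral_sub (hinner_int (x + δ) a ha) (hinner_int x a ha)).symm
    set c₂ : ℝ := (a ^ 2)⁻¹ * (C * |a| ^ (α + 1 / 2)) * (|a| ^ (-(1 : ℝ) / 2) * (K * (|δ| / |a|)))
      with hc₂_def
    have hc₂_nonneg : 0 ≤ c₂ := by rw [hc₂_def]; positivity
    have hIcc : ∀ b : ℝ,
        ‖(a ^ 2)⁻¹ * W a b * (|a| ^ (-(1 : ℝ) / 2) * ψ₂ ((x + δ - b) / a))
          - (a ^ 2)⁻¹ * W a b * (|a| ^ (-(1 : ℝ) / 2) * ψ₂ ((x - b) / a))‖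
        ≤ (Set.Icc (x - (R * |a| + |δ|)) (x + (R * |a| + |δ|))).indicator (fun _ => c₂) b := by
      intro b
      rw [Real.norm_eq_abs]
      have hlip : |ψ₂ ((x + δ - b) / a) - ψ₂ ((x - b) / a)| ≤ K * (|δ| / |a|) := by
        have h := hψ₂_lip ((x - b) / a) (δ / a)
        have e : (x - b) / a + δ / a = (x + δ - b) / a := by ring
        rw [e] at h
        calc |ψ₂ ((x + δ - b) / a) - ψ₂ ((x - b) / a)| ≤ K * |δ / a| := h
          _ = K * (|δ| / |a|) := by rw [abs_div]
      by_cases hb : ψ₂ ((x + δ - b) / a) = 0 ∧ ψ₂ ((x - b) / a) = 0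
      · rw [hb.1, hb.2]
        simp only [mul_zero, sub_zero, sub_self, abs_zero]
        exact Set.indicator_nonneg (fun _ _ => hc₂_nonneg) b
      · have hbmem : b ∈ Set.Icc (x - (R * |a| + |δ|)) (x + (R * |a| + |δ|)) := by
          rcases not_and_or.mp hb with hb1 | hb2
          · have h1 : (x + δ - b) / a ∈ Set.Icc (-R) R := hψ₂_supp hb1
            have h2 : |(x + δ - b) / a| ≤ R := abs_le.2 ⟨h1.1, h1.2⟩
            rw [abs_div] at h2
            have h3 : |x + δ - b| ≤ R * |a| := (div_le_iff₀ ha0).mp h2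
            have h4 := abs_le.1 h3
            have h5 := abs_le.1 (le_refl |δ|)
            have h6 : -|δ| ≤ δ := neg_abs_le δ
            have h7 : δ ≤ |δ| := le_abs_self δ
            constructor <;> [linarith [h4.2]; linarith [h4.1]]
          · have h1 : (x - b) / a ∈ Set.Icc (-R) R := hψ₂_supp hb2
            have h2 : |(x - b) / a| ≤ R := abs_le.2 ⟨h1.1, h1.2⟩
            rw [abs_div] at h2
            have h3 : |x - b| ≤ R * |a| := (div_le_iff₀ ha0).mp h2
            have h4 := abs_le.1 h3
            constructor <;> [linarith [h4.2, abs_nonneg δ]; linarith [h4.1, abs_nonneg δ]]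
        rw [Set.indicator_of_mem hbmem]
        have e : (a ^ 2)⁻¹ * W a b * (|a| ^ (-(1 : ℝ) / 2) * ψ₂ ((x + δ - b) / a))
            - (a ^ 2)⁻¹ * W a b * (|a| ^ (-(1 : ℝ) / 2) * ψ₂ ((x - b) / a))
            = (a ^ 2)⁻¹ * W a b * (|a| ^ (-(1 : ℝ) / 2)
              * (ψ₂ ((x + δ - b) / a) - ψ₂ ((x - b) / a))) := by ring
        rw [e, abs_mul, abs_mul, abs_mul]
        have e1 : |(a ^ 2)⁻¹| = (a ^ 2)⁻¹ := abs_of_nonneg (by positivity)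
        have e2 : abs (|a| ^ (-(1 : ℝ) / 2)) = |a| ^ (-(1 : ℝ) / 2) := abs_of_nonneg (by positivity)
        rw [e1, e2, hc₂_def]
        exact aux_mul_le _ _ _ _ _ _ (by positivity) (by positivity)
          (h_decay a ha.1 ha.2 b) hlip
    have hind : |F (x + δ) a - F x a|
        ≤ c₂ * (2 * (R * |a| + |δ|)) := by
      rw [hsub, ← Real.norm_eq_abs]
      refine le_trans (norm_integral_le_of_norm_le ?_ (Filter.Eventually.of_forall hIcc)) ?_
      · refine (integrableOn_const ?_).integrable_indicator measurableSet_Icc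
        exact measure_Icc_lt_top.ne
      · rw [integral_indicator_const _ measurableSet_Icc, Real.volume_real_Icc]
        have e : x + (R * |a| + |δ|) - (x - (R * |a| + |δ|)) = 2 * (R * |a| + |δ|) := by ring
        rw [e, max_eq_left (by positivity)]
        rw [smul_eq_mul, mul_comm]
    refine le_trans hind ?_
    have h1 : R * |a| + |δ| ≤ (R + 1) * |a| := by nlinarith [hR.le]
    have h2 : c₂ * (2 * (R * |a| + |δ|)) ≤ c₂ * (2 * ((R + 1) * |a|)) := by
      gcongr
    refine le_trans h2 (le_of_eq ?_)
    rw [hc₂_def, hsq a ha0]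
    have e : |a| = |a| ^ (1 : ℝ) := (rpow_one _).symm
    calc |a| ^ (-2:ℝ) * (C * |a| ^ (α + 1 / 2)) * (|a| ^ (-(1 : ℝ) / 2) * (K * (|δ| / |a|)))
          * (2 * ((R + 1) * |a|))
        = 2 * C * K * (R + 1) * |δ| *
          (|a| ^ (-2:ℝ) * |a| ^ (α + 1 / 2) * |a| ^ (-(1 : ℝ) / 2) * |a| ^ (-1:ℝ) * |a| ^ (1:ℝ))
          := by
          rw [show K * (|δ| / |a|) = K * (|δ| * |a| ^ (-1:ℝ)) by
            rw [div_eq_mul_inv, rpow_neg_one], ← e]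
          ring
      _ = 2 * C * K * (R + 1) * |δ| * |a| ^ (α - 2) := by
          rw [hpow a ha0, hpow a ha0, hpow a ha0, hpow a ha0,
            show (-2:ℝ) + (α + 1 / 2) + (-(1:ℝ) / 2) + (-1:ℝ) + 1 = α - 2 by ring]
  -- measurability and integrability of `a ↦ F x a` on `S`
  have hF_meas : ∀ x : ℝ, AEStronglyMeasurable (fun a => F x a) (volume.restrict S) := by
    intro x
    have hm : StronglyMeasurable fun p : ℝ × ℝ =>
        (p.1 ^ 2)⁻¹ * W p.1 p.2 * (|p.1| ^ (-(1 : ℝ) / 2) * ψ₂ ((x - p.2) / p.1)) := by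
      apply Measurable.stronglyMeasurable
      have hm1 : Measurable fun p : ℝ × ℝ => (p.1 ^ 2)⁻¹ :=
        (measurable_fst.pow measurable_const).inv
      have hm2 : Measurable fun p : ℝ × ℝ => |p.1| ^ (-(1 : ℝ) / 2) := by fun_prop
      have hm3 : Measurable fun p : ℝ × ℝ => ψ₂ ((x - p.2) / p.1) :=
        hψ₂_cont.measurable.comp ((measurable_const.sub measurable_snd).div measurable_fst)
      exact (hm1.mul hW_meas).mul (hm2.mul hm3)
    exact (hm.integral_prod_right').aestronglyMeasurable.restrict
  have hdom : IntegrableOn (fun a => 2 * C * M * R * |a| ^ (α - 1)) S volume := by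
    have hsub : S ⊆ Set.Icc (-1 : ℝ) 1 := by
      intro a ha
      have h := abs_le.1 ha.2
      exact ⟨h.1, h.2⟩
    have hIcc : IntegrableOn (fun a => |a| ^ (α - 1)) (Set.Icc (-1 : ℝ) 1) volume := by
      rw [show ((-1 : ℝ)) = -(1:ℝ) by norm_num, integrableOn_Icc_iff_integrableOn_Ioc]
      exact (aux_sym (α - 1) (by linarith) 1 zero_le_one).1
    exact (hIcc.mono_set hsub).const_mul _
  have hF_int : ∀ x : ℝ, IntegrableOn (fun a => F x a) S volume := by
    intro x
    refine Integrable.mono' hdom (hF_meas x) ?_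
    filter_upwards [ae_restrict_mem hSm] with a ha
    rw [Real.norm_eq_abs]
    exact hF_bound x a ha
  -- the final constant
  refine ⟨2 * (2 * C * M * R) * (2 * (1 / α)) + 2 * C * K * (R + 1) * (2 * (1 / (1 - α))), ?_, ?_⟩
  · have h1 : (0:ℝ) ≤ 2 * (2 * C * M * R) * (2 * (1 / α)) := by positivity
    have h2 : (0:ℝ) ≤ 2 * C * K * (R + 1) * (2 * (1 / (1 - α))) := by
      have : (0:ℝ) < 1 - α := by linarith
      positivity
    linarith
  intro x δ hδ hδ1
  set d : ℝ := |δ| with hd_def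
  have hd : 0 < d := hδ
  have hd1 : d ≤ 1 := hδ1
  set S₁ : Set ℝ := S ∩ {a : ℝ | |a| ≤ d} with hS₁_def
  set S₂ : Set ℝ := S ∩ {a : ℝ | d < |a|} with hS₂_def
  have hS₂m : MeasurableSet S₂ :=
    hSm.inter ((measurable_abs) measurableSet_Ioi)
  have hSsplit : S = S₁ ∪ S₂ := by
    ext a
    simp only [hS₁_def, hS₂_def, Set.mem_union, Set.mem_inter_iff, Set.mem_setOf_eq]
    constructor
    · intro ha
      rcases le_or_gt |a| d with h | h
      · exact Or.inl ⟨ha, h⟩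
      · exact Or.inr ⟨ha, h⟩
    · rintro (⟨ha, -⟩ | ⟨ha, -⟩) <;> exact ha
  have hdisj : Disjoint S₁ S₂ := by
    rw [Set.disjoint_left]
    rintro a ⟨-, h1⟩ ⟨-, h2⟩
    simp only [Set.mem_setOf_eq] at h1 h2
    exact absurd h1 (not_le.2 h2)
  set G : ℝ → ℝ := fun a => F (x + δ) a - F x a with hG_def
  have hG_int : IntegrableOn G S volume := (hF_int (x + δ)).sub (hF_int x)
  have hmain : |fS (x + δ) - fS x| ≤ ∫ a in S, |G a| := by
    rw [hfS (x + δ), hfS x]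
    have e : (∫ a in S, F (x + δ) a) - ∫ a in S, F x a = ∫ a in S, G a :=
      (integral_sub (hF_int (x + δ)) (hF_int x)).symm
    rw [e, ← Real.norm_eq_abs]
    refine le_trans (norm_integral_le_integral_norm G) (le_of_eq ?_)
    simp only [Real.norm_eq_abs]
  have hsplit : ∫ a in S, |G a| = (∫ a in S₁, |G a|) + ∫ a in S₂, |G a| := by
    rw [hSsplit]
    exact setIntegral_union hdisj hS₂m
      (IntegrableOn.mono_set hG_int.norm (hSsplit ▸ Set.subset_union_left))
      (IntegrableOn.mono_set hG_int.norm (hSsplit ▸ Set.subset_union_right))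
  -- term 1
  have hterm1 : ∫ a in S₁, |G a| ≤ 2 * (2 * C * M * R) * (2 * (d ^ α / α)) := by
    have hIoc : IntegrableOn (fun a => |a| ^ (α - 1)) (Set.Ioc (-d) d) volume :=
      (aux_sym (α - 1) (by linarith) d hd.le).1
    have hdom1 : IntegrableOn (fun a => 2 * (2 * C * M * R) * |a| ^ (α - 1)) (Set.Icc (-d) d)
        volume := by
      rw [integrableOn_Icc_iff_integrableOn_Ioc]
      exact hIoc.const_mul _
    have hS₁sub : S₁ ⊆ Set.Icc (-d) d := by
      rintro a ⟨-, hle⟩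
      exact abs_le.1 hle
    have hS₁m : MeasurableSet S₁ := hSm.inter ((measurable_abs) measurableSet_Iic)
    have step1 : ∫ a in S₁, |G a| ≤ ∫ a in S₁, 2 * (2 * C * M * R) * |a| ^ (α - 1) := by
      refine setIntegral_mono_on
        (IntegrableOn.mono_set hG_int.norm (hSsplit ▸ Set.subset_union_left)) (hdom1.mono_set hS₁sub)
        hS₁m ?_
      rintro a ⟨ha, -⟩
      calc |G a| ≤ |F (x + δ) a| + |F x a| := abs_sub _ _
        _ ≤ 2 * C * M * R * |a| ^ (α - 1) + 2 * C * M * R * |a| ^ (α - 1) :=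
          add_le_add (hF_bound (x + δ) a ha) (hF_bound x a ha)
        _ = 2 * (2 * C * M * R) * |a| ^ (α - 1) := by ring
    have step2 : ∫ a in S₁, 2 * (2 * C * M * R) * |a| ^ (α - 1)
        ≤ ∫ a in Set.Icc (-d) d, 2 * (2 * C * M * R) * |a| ^ (α - 1) := by
      refine setIntegral_mono_set hdom1 ?_ (HasSubset.Subset.eventuallyLE hS₁sub)
      filter_upwards with a
      positivity
    have step3 : ∫ a in Set.Icc (-d) d, 2 * (2 * C * M * R) * |a| ^ (α - 1)
        = 2 * (2 * C * M * R) * (2 * (d ^ α / α)) := by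
      rw [setIntegral_congr_set (Ioc_ae_eq_Icc).symm, integral_const_mul,
        (aux_sym (α - 1) (by linarith) d hd.le).2]
      norm_num
    calc ∫ a in S₁, |G a| ≤ _ := step1
      _ ≤ _ := step2
      _ = _ := step3
  -- term 2
  have hterm2 : ∫ a in S₂, |G a| ≤ 2 * C * K * (R + 1) * d * (2 * (d ^ (α - 1) / (1 - α))) := by
    have htail := aux_tail (α - 2) (by linarith) d hd hd1
    have hU_int : IntegrableOn (fun a => 2 * C * K * (R + 1) * d * |a| ^ (α - 2))
        (Set.Icc (-1) (-d) ∪ Set.Ioc d 1) volume := htail.1.const_mul _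
    have hS₂sub : S₂ ⊆ Set.Icc (-1) (-d) ∪ Set.Ioc d 1 := by
      rintro a ⟨ha, hlt⟩
      simp only [Set.mem_setOf_eq] at hlt
      have h := abs_le.1 ha.2
      have h0 : a ≠ 0 := abs_pos.mp ha.1
      rcases lt_or_gt_of_ne h0 with hneg | hpos
      · left
        rw [abs_of_neg hneg] at hlt
        exact ⟨h.1, by linarith⟩
      · right
        rw [abs_of_pos hpos] at hlt
        exact ⟨hlt, h.2⟩
    have step1 : ∫ a in S₂, |G a| ≤ ∫ a in S₂, 2 * C * K * (R + 1) * d * |a| ^ (α - 2) := by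
      refine setIntegral_mono_on
        (IntegrableOn.mono_set hG_int.norm (hSsplit ▸ Set.subset_union_right))
        (hU_int.mono_set hS₂sub) hS₂m ?_
      rintro a ⟨ha, hlt⟩
      exact hF_diff x δ a ha hδ (le_of_lt hlt)
    have step2 : ∫ a in S₂, 2 * C * K * (R + 1) * d * |a| ^ (α - 2)
        ≤ ∫ a in Set.Icc (-1) (-d) ∪ Set.Ioc d 1, 2 * C * K * (R + 1) * d * |a| ^ (α - 2) := by
      refine setIntegral_mono_set hU_int ?_ (HasSubset.Subset.eventuallyLE hS₂sub)
      filter_upwards with a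
      positivity
    have step3 : ∫ a in Set.Icc (-1) (-d) ∪ Set.Ioc d 1, 2 * C * K * (R + 1) * d * |a| ^ (α - 2)
        ≤ 2 * C * K * (R + 1) * d * (2 * (d ^ (α - 1) / (1 - α))) := by
      rw [integral_const_mul]
      have hb := htail.2
      have hcoef : (0:ℝ) ≤ 2 * C * K * (R + 1) * d := by positivity
      have : 2 * (d ^ (α - 2 + 1) / (-(α - 2 + 1))) = 2 * (d ^ (α - 1) / (1 - α)) := by
        rw [show -(α - 2 + 1) = 1 - α by ring, show α - 2 + 1 = α - 1 by ring]
      rw [this] at hb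
      exact mul_le_mul_of_nonneg_left hb hcoef
    calc ∫ a in S₂, |G a| ≤ _ := step1
      _ ≤ _ := step2
      _ ≤ _ := step3
  -- assemble
  have hda : d * d ^ (α - 1) = d ^ α := by
    calc d * d ^ (α - 1) = d ^ (1:ℝ) * d ^ (α - 1) := by rw [rpow_one]
      _ = d ^ (1 + (α - 1)) := (rpow_add hd 1 (α - 1)).symm
      _ = d ^ α := by norm_num
  calc |fS (x + δ) - fS x| ≤ ∫ a in S, |G a| := hmain
    _ = (∫ a in S₁, |G a|) + ∫ a in S₂, |G a| := hsplit
    _ ≤ 2 * (2 * C * M * R) * (2 * (d ^ α / α))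
        + 2 * C * K * (R + 1) * d * (2 * (d ^ (α - 1) / (1 - α))) := add_le_add hterm1 hterm2
    _ = (2 * (2 * C * M * R) * (2 * (1 / α)) + 2 * C * K * (R + 1) * (2 * (1 / (1 - α))))
        * d ^ α := by
      rw [← hda]; ring
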